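/- Let n₁, n₂ ≥ 1 and let X₁, X₂ be n₂×n₁ complex matrices and Y₁, Y₂ be n₁×n₂ complex matrices. The tuple (X₁, X₂, Y₁, Y₂) is a critical point of the function f(X₁, X₂, Y₁, Y₂) = tr(X₁Y₁X₂Y₂ − X₁Y₂X₂Y₁) (i.e. the Fréchet derivative of f vanishes there) if and only if the four relations Y₁X₂Y₂ = Y₂X₂Y₁, Y₂X₁Y₁ = Y₁X₁Y₂, X₂Y₂X₁ = X₁Y₂X₂ and X₁Y₁X₂ = X₂Y₁X₁ hold. -/

import Mathlib

attribute [local instance] Matrix.normedAddCommGroup Matrix.normedSpace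

open Matrix

noncomputable def matMulCLM (l m n : Type*) [Fintype l] [Fintype m] [Fintype n] :
    Matrix l m ℂ →L[ℂ] Matrix m n ℂ →L[ℂ] Matrix l n ℂ :=
  LinearMap.toContinuousLinearMap
    ((LinearMap.toContinuousLinearMap :
        (Matrix m n ℂ →ₗ[ℂ] Matrix l n ℂ) ≃ₗ[ℂ] (Matrix m n ℂ →L[ℂ] Matrix l n ℂ)).toLinearMap
      ∘ₗ LinearMap.mk₂ ℂ (· * ·) Matrix.add_mul Matrix.smul_mul Matrix.mul_add
          (fun c A B => Matrix.mul_smul A c B))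

@[simp] lemma matMulCLM_apply {l m n : Type*} [Fintype l] [Fintype m] [Fintype n]
    (A : Matrix l m ℂ) (B : Matrix m n ℂ) : matMulCLM l m n A B = A * B := rfl

noncomputable def traceCLM (n : Type*) [Fintype n] : Matrix n n ℂ →L[ℂ] ℂ :=
  LinearMap.toContinuousLinearMap (Matrix.traceLinearMap n ℂ ℂ)

@[simp] lemma traceCLM_apply {n : Type*} [Fintype n] (A : Matrix n n ℂ) :
    traceCLM n A = A.trace := rfl

lemma hasFDerivAt_matmul {l m n : Type*} {E : Type*} [Fintype l] [Fintype m] [Fintype n]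
    [NormedAddCommGroup E] [NormedSpace ℂ E]
    {u : E → Matrix l m ℂ} {v : E → Matrix m n ℂ} {u' : E →L[ℂ] Matrix l m ℂ}
    {v' : E →L[ℂ] Matrix m n ℂ} {x : E} (hu : HasFDerivAt u u' x) (hv : HasFDerivAt v v' x) :
    HasFDerivAt (fun x => u x * v x)
      ((matMulCLM l m n).precompR E (u x) v' + (matMulCLM l m n).precompL E u' (v x)) x :=
  (matMulCLM l m n).hasFDerivAt_of_bilinear hu hv

lemma eq_of_trace_mul_eq {m n : Type*} [Fintype m] [Fintype n] [DecidableEq m] [DecidableEq n]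
    {M N : Matrix m n ℂ} (h : ∀ A : Matrix n m ℂ, (A * M).trace = (A * N).trace) : M = N := by
  ext i j
  have := h (single j i 1)
  simpa [Matrix.trace, Matrix.mul_apply, Matrix.single, Matrix.diag, ite_and,
    Finset.sum_ite_eq, Finset.sum_ite_eq'] using this


section slots
variable {k l m n : Type*} [Fintype k] [Fintype l] [Fintype m] [Fintype n]

lemma trace_slot1 (V : Matrix k l ℂ) (Q : Matrix l m ℂ) (R : Matrix m n ℂ) (S : Matrix n k ℂ) :
    (V * Q * R * S).trace = (V * (Q * R * S)).trace := by
  rw [Matrix.mul_assoc V Q R, Matrix.mul_assoc V (Q * R) S]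

lemma trace_slot2 (P : Matrix k l ℂ) (V : Matrix l m ℂ) (Q : Matrix m n ℂ) (R : Matrix n k ℂ) :
    (P * V * Q * R).trace = (V * (Q * R * P)).trace := by
  rw [Matrix.mul_assoc, Matrix.mul_assoc, Matrix.trace_mul_comm, Matrix.mul_assoc V (Q * R) P,
    Matrix.mul_assoc Q R P]

lemma trace_slot3 (P : Matrix k l ℂ) (Q : Matrix l m ℂ) (V : Matrix m n ℂ) (R : Matrix n k ℂ) :
    (P * Q * V * R).trace = (V * (R * P * Q)).trace := by
  rw [Matrix.mul_assoc (P * Q) V R, Matrix.trace_mul_comm, Matrix.mul_assoc V R (P * Q),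
    ← Matrix.mul_assoc R P Q]

lemma trace_slot4 (P : Matrix k l ℂ) (Q : Matrix l m ℂ) (R : Matrix m n ℂ) (V : Matrix n k ℂ) :
    (P * Q * R * V).trace = (V * (P * Q * R)).trace :=
  Matrix.trace_mul_comm (P * Q * R) V

end slots


/-- For the conifold superpotential `W = x₁y₁x₂y₂ − x₁y₂x₂y₁`, a tuple
`(X₁, X₂, Y₁, Y₂)` of rectangular matrices is a critical point of
`f(X₁,X₂,Y₁,Y₂) = tr(X₁Y₁X₂Y₂ − X₁Y₂X₂Y₁)` (i.e. the Fréchet derivative of `f`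
vanishes there) iff the four cyclic-derivative relations hold. -/
theorem critical_conifold_superpotential_iff
    (n₁ n₂ : ℕ) (hn₁ : 1 ≤ n₁) (hn₂ : 1 ≤ n₂)
    (X₁ X₂ : Matrix (Fin n₂) (Fin n₁) ℂ) (Y₁ Y₂ : Matrix (Fin n₁) (Fin n₂) ℂ) :
    fderiv ℂ
        (fun p : Matrix (Fin n₂) (Fin n₁) ℂ × Matrix (Fin n₂) (Fin n₁) ℂ ×
            Matrix (Fin n₁) (Fin n₂) ℂ × Matrix (Fin n₁) (Fin n₂) ℂ =>
          (p.1 * p.2.2.1 * p.2.1 * p.2.2.2 - p.1 * p.2.2.2 * p.2.1 * p.2.2.1).trace)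
        (X₁, X₂, Y₁, Y₂) = 0 ↔
      Y₁ * X₂ * Y₂ = Y₂ * X₂ * Y₁ ∧ Y₂ * X₁ * Y₁ = Y₁ * X₁ * Y₂ ∧
        X₂ * Y₂ * X₁ = X₁ * Y₂ * X₂ ∧ X₁ * Y₁ * X₂ = X₂ * Y₁ * X₁ := by

  set pt : Matrix (Fin n₂) (Fin n₁) ℂ × Matrix (Fin n₂) (Fin n₁) ℂ ×
      Matrix (Fin n₁) (Fin n₂) ℂ × Matrix (Fin n₁) (Fin n₂) ℂ := (X₁, X₂, Y₁, Y₂) with hpt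
  have hP1 : HasFDerivAt (fun p : Matrix (Fin n₂) (Fin n₁) ℂ × Matrix (Fin n₂) (Fin n₁) ℂ ×
      Matrix (Fin n₁) (Fin n₂) ℂ × Matrix (Fin n₁) (Fin n₂) ℂ => p.1)
      (ContinuousLinearMap.fst ℂ _ _) pt := hasFDerivAt_fst
  have hP2 : HasFDerivAt (fun p : Matrix (Fin n₂) (Fin n₁) ℂ × Matrix (Fin n₂) (Fin n₁) ℂ ×
      Matrix (Fin n₁) (Fin n₂) ℂ × Matrix (Fin n₁) (Fin n₂) ℂ => p.2.1)
      ((ContinuousLinearMap.fst ℂ _ _).comp (ContinuousLinearMap.snd ℂ _ _)) pt :=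
    hasFDerivAt_fst.comp pt hasFDerivAt_snd
  have hQ1 : HasFDerivAt (fun p : Matrix (Fin n₂) (Fin n₁) ℂ × Matrix (Fin n₂) (Fin n₁) ℂ ×
      Matrix (Fin n₁) (Fin n₂) ℂ × Matrix (Fin n₁) (Fin n₂) ℂ => p.2.2.1)
      ((ContinuousLinearMap.fst ℂ _ _).comp ((ContinuousLinearMap.snd ℂ _ _).comp
        (ContinuousLinearMap.snd ℂ _ _))) pt :=
    hasFDerivAt_fst.comp pt (hasFDerivAt_snd.comp pt hasFDerivAt_snd)
  have hQ2 : HasFDerivAt (fun p : Matrix (Fin n₂) (Fin n₁) ℂ × Matrix (Fin n₂) (Fin n₁) ℂ ×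
      Matrix (Fin n₁) (Fin n₂) ℂ × Matrix (Fin n₁) (Fin n₂) ℂ => p.2.2.2)
      ((ContinuousLinearMap.snd ℂ _ _).comp ((ContinuousLinearMap.snd ℂ _ _).comp
        (ContinuousLinearMap.snd ℂ _ _))) pt :=
    hasFDerivAt_snd.comp pt (hasFDerivAt_snd.comp pt hasFDerivAt_snd)
  have hg1 := hasFDerivAt_matmul (hasFDerivAt_matmul (hasFDerivAt_matmul hP1 hQ1) hP2) hQ2
  have hg2 := hasFDerivAt_matmul (hasFDerivAt_matmul (hasFDerivAt_matmul hP1 hQ2) hP2) hQ1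
  have ht1 := (traceCLM (Fin n₂)).hasFDerivAt.comp pt hg1
  have ht2 := (traceCLM (Fin n₂)).hasFDerivAt.comp pt hg2
  obtain ⟨D, hD, hDw⟩ : ∃ D : (Matrix (Fin n₂) (Fin n₁) ℂ × Matrix (Fin n₂) (Fin n₁) ℂ ×
      Matrix (Fin n₁) (Fin n₂) ℂ × Matrix (Fin n₁) (Fin n₂) ℂ) →L[ℂ] ℂ,
      HasFDerivAt (fun p : Matrix (Fin n₂) (Fin n₁) ℂ × Matrix (Fin n₂) (Fin n₁) ℂ ×
          Matrix (Fin n₁) (Fin n₂) ℂ × Matrix (Fin n₁) (Fin n₂) ℂ =>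
        (p.1 * p.2.2.1 * p.2.1 * p.2.2.2 - p.1 * p.2.2.2 * p.2.1 * p.2.2.1).trace) D pt ∧
      ∀ w : Matrix (Fin n₂) (Fin n₁) ℂ × Matrix (Fin n₂) (Fin n₁) ℂ ×
          Matrix (Fin n₁) (Fin n₂) ℂ × Matrix (Fin n₁) (Fin n₂) ℂ,
        D w = (w.1 * Y₁ * X₂ * Y₂).trace + (X₁ * w.2.2.1 * X₂ * Y₂).trace
            + (X₁ * Y₁ * w.2.1 * Y₂).trace + (X₁ * Y₁ * X₂ * w.2.2.2).trace
            - ((w.1 * Y₂ * X₂ * Y₁).trace + (X₁ * w.2.2.2 * X₂ * Y₁).trace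
            + (X₁ * Y₂ * w.2.1 * Y₁).trace + (X₁ * Y₂ * X₂ * w.2.2.1).trace) := by
    refine ⟨_, (ht1.sub ht2).congr_of_eventuallyEq
      (Filter.EventuallyEq.of_eq (funext fun p => by
        simp [Function.comp, Matrix.trace_sub])), fun w => ?_⟩
    change Matrix.trace (X₁ * Y₁ * X₂ * w.2.2.2
          + (X₁ * Y₁ * w.2.1 + (X₁ * w.2.2.1 + w.1 * Y₁) * X₂) * Y₂)
        - Matrix.trace (X₁ * Y₂ * X₂ * w.2.2.1
          + (X₁ * Y₂ * w.2.1 + (X₁ * w.2.2.2 + w.1 * Y₂) * X₂) * Y₁) = _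
    simp [Matrix.add_mul, Matrix.trace_add]
    ring
  rw [hD.fderiv, ContinuousLinearMap.ext_iff]
  simp only [hDw, ContinuousLinearMap.zero_apply, sub_eq_zero]
  constructor
  · intro h
    refine ⟨?_, ?_, ?_, ?_⟩
    · refine eq_of_trace_mul_eq fun A => ?_
      have := h (A, 0, 0, 0)
      simp only [Matrix.mul_zero, Matrix.zero_mul, Matrix.trace_zero, add_zero, zero_add] at this
      rwa [trace_slot1 A Y₁ X₂ Y₂, trace_slot1 A Y₂ X₂ Y₁] at this
    · refine eq_of_trace_mul_eq fun B => ?_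
      have := h (0, B, 0, 0)
      simp only [Matrix.mul_zero, Matrix.zero_mul, Matrix.trace_zero, add_zero, zero_add] at this
      rwa [trace_slot3 X₁ Y₁ B Y₂, trace_slot3 X₁ Y₂ B Y₁] at this
    · refine eq_of_trace_mul_eq fun C => ?_
      have := h (0, 0, C, 0)
      simp only [Matrix.mul_zero, Matrix.zero_mul, Matrix.trace_zero, add_zero, zero_add] at this
      rwa [trace_slot2 X₁ C X₂ Y₂, trace_slot4 X₁ Y₂ X₂ C] at this
    · refine eq_of_trace_mul_eq fun Dm => ?_
      have := h (0, 0, 0, Dm)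
      simp only [Matrix.mul_zero, Matrix.zero_mul, Matrix.trace_zero, add_zero, zero_add] at this
      rwa [trace_slot4 X₁ Y₁ X₂ Dm, trace_slot2 X₁ Dm X₂ Y₁] at this
  · rintro ⟨h1, h2, h3, h4⟩ w
    rw [trace_slot1 w.1 Y₁ X₂ Y₂, trace_slot1 w.1 Y₂ X₂ Y₁,
      trace_slot2 X₁ w.2.2.1 X₂ Y₂, trace_slot4 X₁ Y₂ X₂ w.2.2.1,
      trace_slot3 X₁ Y₁ w.2.1 Y₂, trace_slot3 X₁ Y₂ w.2.1 Y₁,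
      trace_slot4 X₁ Y₁ X₂ w.2.2.2, trace_slot2 X₁ w.2.2.2 X₂ Y₁,
      h1, h2, h3, h4]
    ring
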